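/- arXiv:1903.01444 — 2 statements merged into one kernel-verified Lean document; each statement's English description precedes it below -/
import Mathlib

section
/- Let 0 < r < 1 and set s := 2r/(1+r²), L₁ := 2s/(1−s), L₂ := (1+s)/(1−s). For every holomorphic function f on the open unit disc {z ∈ ℂ : |z| < 1} with |f(z)| < 1 for all z in the disc, and for all points z₁, z₂ with |z₁| ≤ r and |z₂| ≤ r, the following two inequalities hold: |f(z₁) − f(z₂)| ≤ L₁·(1 − |f(z₁)|) and 1 − |f(z₂)| ≤ L₂·(1 − |f(z₁)|). -/
open Complex Metric Set

noncomputable def mob (a w : ℂ) : ℂ := (w - a) / (1 - (starRingEnd ℂ) a * w)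

lemma mob_den_ne {a w : ℂ} (ha : ‖a‖ < 1) (hw : ‖w‖ ≤ 1) :
    (1 : ℂ) - (starRingEnd ℂ) a * w ≠ 0 := by
  intro h
  have h1 : (starRingEnd ℂ) a * w = 1 := by
    have := sub_eq_zero.1 h; exact this.symm
  have : ‖(starRingEnd ℂ) a * w‖ = 1 := by rw [h1]; simp
  rw [norm_mul, Complex.norm_conj] at this
  nlinarith [norm_nonneg w, norm_nonneg a]

lemma mob_key (a w : ℂ) : Complex.normSq (1 - (starRingEnd ℂ) a * w) - Complex.normSq (w - a)
    = (1 - Complex.normSq a) * (1 - Complex.normSq w) := by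
  simp [Complex.normSq_apply, Complex.sub_re, Complex.sub_im, Complex.mul_re, Complex.mul_im]
  ring

lemma mob_maps {a w : ℂ} (ha : ‖a‖ < 1) (hw : ‖w‖ < 1) :
    ‖mob a w‖ < 1 := by
  have hden := mob_den_ne ha hw.le
  have hdenpos : 0 < ‖1 - (starRingEnd ℂ) a * w‖ := by
    simpa [norm_pos_iff] using hden
  rw [mob, norm_div, div_lt_one hdenpos]
  have hsq : Complex.normSq (w - a) < Complex.normSq (1 - (starRingEnd ℂ) a * w) := by
    have h := mob_key a w
    have h1 : Complex.normSq a < 1 := by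
      rw [← Complex.sq_norm]; nlinarith [norm_nonneg a]
    have h2 : Complex.normSq w < 1 := by
      rw [← Complex.sq_norm]; nlinarith [norm_nonneg w]
    nlinarith
  have := Real.sqrt_lt_sqrt (Complex.normSq_nonneg _) hsq
  simpa [Complex.norm_def] using this

lemma mob_diffOn {a : ℂ} (ha : ‖a‖ < 1) :
    DifferentiableOn ℂ (mob a) (ball 0 1) := by
  apply DifferentiableOn.div
  · exact (differentiable_id.sub_const a).differentiableOn
  · exact ((differentiable_const _).sub ((differentiable_const _).mul differentiable_id)).differentiableOn
  · intro w hw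
    have hw' : ‖w‖ < 1 := by simpa [mem_ball_zero_iff] using hw
    exact mob_den_ne ha hw'.le

lemma mob_inv {a z : ℂ} (ha : ‖a‖ < 1) (hz : ‖z‖ < 1) :
    mob (-a) (mob a z) = z := by
  have h1 : (1 : ℂ) - (starRingEnd ℂ) a * z ≠ 0 := mob_den_ne ha hz.le
  have hm : ‖mob a z‖ < 1 := mob_maps ha hz
  have h2 : (1 : ℂ) - (starRingEnd ℂ) (-a) * (mob a z) ≠ 0 :=
    mob_den_ne (by simpa using ha) hm.le
  simp only [mob, map_neg] at h2 ⊢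
  field_simp at h2 ⊢
  rw [div_eq_iff (div_ne_zero_iff.1 h2).1]; ring

lemma pseudo_bound {r : ℝ} (hr0 : 0 < r) (hr1 : r < 1) {z₁ z₂ : ℂ}
    (h₁ : ‖z₁‖ ≤ r) (h₂ : ‖z₂‖ ≤ r) :
    ‖z₂ - z₁‖ ≤
      (2 * r / (1 + r ^ 2)) * ‖1 - (starRingEnd ℂ) z₁ * z₂‖ := by
  set u := ‖z₁‖ with hu
  set v := ‖z₂‖ with hv
  set c := (starRingEnd ℂ) z₁ * z₂ with hcdef
  set t := c.re with htdef
  have hu0 : 0 ≤ u := norm_nonneg _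
  have hv0 : 0 ≤ v := norm_nonneg _
  have habsc : ‖c‖ = u * v := by
    rw [hcdef, norm_mul, Complex.norm_conj]
  have ht : |t| ≤ u * v := by rw [← habsc]; exact Complex.abs_re_le_norm c
  have htlow : -(u * v) ≤ t := (abs_le.1 ht).1
  have hnc : Complex.normSq c = (u * v) ^ 2 := by
    rw [← Complex.sq_norm, habsc]
  have n1 : Complex.normSq (z₂ - z₁) = u ^ 2 + v ^ 2 - 2 * t := by
    rw [Complex.normSq_sub, ← Complex.sq_norm z₁, ← Complex.sq_norm z₂]
    have : (z₂ * (starRingEnd ℂ) z₁).re = t := by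
      rw [htdef, hcdef, mul_comm]
    rw [this]; ring
  have n2 : Complex.normSq (1 - c) = 1 - 2 * t + (u * v) ^ 2 := by
    rw [Complex.normSq_sub, hnc, Complex.normSq_one]
    have : (1 * (starRingEnd ℂ) c).re = t := by
      rw [one_mul, Complex.conj_re]
    rw [this]; ring
  have hrv : 0 ≤ 1 - r * v := by nlinarith
  have hru : 0 ≤ 1 - r * u := by nlinarith
  have key : 0 ≤ 2 * r * (1 + u * v) - (u + v) * (1 + r ^ 2) := by
    nlinarith [mul_nonneg (by linarith : (0:ℝ) ≤ r - u) hrv,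
      mul_nonneg (by linarith : (0:ℝ) ≤ r - v) hru]
  have second : 0 ≤ 2 * r * (1 + u * v) + (u + v) * (1 + r ^ 2) := by nlinarith
  have base : 0 ≤ 4 * r ^ 2 * (1 + u * v) ^ 2 - (u + v) ^ 2 * (1 + r ^ 2) ^ 2 := by
    nlinarith [mul_nonneg key second]
  have hposr : (0:ℝ) < 1 + r ^ 2 := by positivity
  have hs0 : (0:ℝ) ≤ 2 * r / (1 + r ^ 2) := by positivity
  have sqineq : Complex.normSq (z₂ - z₁) ≤
      (2 * r / (1 + r ^ 2)) ^ 2 * Complex.normSq (1 - c) := by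
    rw [n1, n2, div_pow, div_mul_eq_mul_div, le_div_iff₀ (by positivity)]
    nlinarith [base, mul_nonneg (by linarith : (0:ℝ) ≤ t + u * v) (sq_nonneg (1 - r ^ 2))]
  calc ‖z₂ - z₁‖ = Real.sqrt (Complex.normSq (z₂ - z₁)) := Complex.norm_def _
    _ ≤ Real.sqrt ((2 * r / (1 + r ^ 2)) ^ 2 * Complex.normSq (1 - c)) :=
        Real.sqrt_le_sqrt sqineq
    _ = (2 * r / (1 + r ^ 2)) * ‖1 - c‖ := by
        rw [Real.sqrt_mul (sq_nonneg _), Real.sqrt_sq hs0, Complex.norm_def]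

lemma arith_final {s A B D : ℝ} (hs0 : 0 < s) (hs1 : s < 1) (hA1 : A < 1) (hA0 : 0 ≤ A)
    (hB0 : 0 ≤ B) (hD0 : 0 ≤ D) (hAB : A - B ≤ D)
    (hDs : D ≤ s * ((1 - A ^ 2) + A * D)) :
    D ≤ 2 * s / (1 - s) * (1 - A) ∧ 1 - B ≤ (1 + s) / (1 - s) * (1 - A) := by
  have h1s : (0:ℝ) < 1 - s := by linarith
  have hDD : D * (1 - s) ≤ 2 * s * (1 - A) := by
    nlinarith [mul_nonneg (mul_nonneg hs0.le hD0) (by linarith : (0:ℝ) ≤ 1 - A),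
      mul_nonneg (mul_nonneg hs0.le (by linarith : (0:ℝ) ≤ 1 - A))
        (by linarith : (0:ℝ) ≤ 1 - A)]
  constructor
  · rw [div_mul_eq_mul_div, le_div_iff₀ h1s]; nlinarith [hDD]
  · rw [div_mul_eq_mul_div, le_div_iff₀ h1s]
    nlinarith [hDD, mul_le_mul_of_nonneg_right
      (by linarith : 1 - B ≤ (1 - A) + D) h1s.le]

/-- Distortion lemma for Ueda's lemma: for a holomorphic `f` on the unit disc with
`|f| < 1` and points `z₁, z₂` in the closed subdisc of radius `r`, with
`s = 2r/(1+r²)`, `L₁ = 2s/(1-s)`, `L₂ = (1+s)/(1-s)`, one has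
`|f z₁ - f z₂| ≤ L₁ (1 - |f z₁|)` and `1 - |f z₂| ≤ L₂ (1 - |f z₁|)`. -/
theorem distortion_lemma (r : ℝ) (hr0 : 0 < r) (hr1 : r < 1)
    (f : ℂ → ℂ) (hf : DifferentiableOn ℂ f (Metric.ball 0 1))
    (hbd : ∀ z ∈ Metric.ball (0 : ℂ) 1, ‖f z‖ < 1)
    (z₁ z₂ : ℂ) (h₁ : ‖z₁‖ ≤ r) (h₂ : ‖z₂‖ ≤ r) :
    ‖f z₁ - f z₂‖ ≤
        2 * (2 * r / (1 + r ^ 2)) / (1 - 2 * r / (1 + r ^ 2)) *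
          (1 - ‖f z₁‖) ∧
      1 - ‖f z₂‖ ≤
        (1 + 2 * r / (1 + r ^ 2)) / (1 - 2 * r / (1 + r ^ 2)) *
          (1 - ‖f z₁‖) := by
  have hposr : (0:ℝ) < 1 + r ^ 2 := by positivity
  set s := 2 * r / (1 + r ^ 2) with hs
  have hs0 : 0 < s := by rw [hs]; positivity
  have hs1 : s < 1 := by rw [hs, div_lt_one hposr]; nlinarith [sq_nonneg (1 - r)]
  have hz₁ : ‖z₁‖ < 1 := lt_of_le_of_lt h₁ hr1
  have hz₂ : ‖z₂‖ < 1 := lt_of_le_of_lt h₂ hr1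
  have hz₁b : z₁ ∈ ball (0:ℂ) 1 := by
    rw [mem_ball_zero_iff]; exact hz₁
  have hz₂b : z₂ ∈ ball (0:ℂ) 1 := by
    rw [mem_ball_zero_iff]; exact hz₂
  have hab : ‖f z₁‖ < 1 := hbd z₁ hz₁b
  have hab2 : ‖f z₂‖ < 1 := hbd z₂ hz₂b
  have hnz₁ : ‖-z₁‖ < 1 := by simpa using hz₁
  have hmapsφ : Set.MapsTo (mob (-z₁)) (ball (0:ℂ) 1) (ball 0 1) := fun w hw => by
    rw [mem_ball_zero_iff] at hw ⊢
    exact mob_maps hnz₁ hw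
  have hmapsf : Set.MapsTo f (ball (0:ℂ) 1) (ball 0 1) := fun z hz => by
    rw [mem_ball_zero_iff]; exact hbd z hz
  have hmapsb : Set.MapsTo (mob (f z₁)) (ball (0:ℂ) 1) (ball 0 1) := fun w hw => by
    rw [mem_ball_zero_iff] at hw ⊢
    exact mob_maps hab hw
  set g : ℂ → ℂ := fun w => mob (f z₁) (f (mob (-z₁) w)) with hg
  have hgd : DifferentiableOn ℂ g (ball 0 1) :=
    (mob_diffOn hab).comp (hf.comp (mob_diffOn hnz₁) hmapsφ) (hmapsf.comp hmapsφ)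
  have hgmaps : Set.MapsTo g (ball (0:ℂ) 1) (ball 0 1) := fun w hw =>
    hmapsb (hmapsf (hmapsφ hw))
  have hφ0 : mob (-z₁) 0 = z₁ := by simp [mob]
  have hg0 : g 0 = 0 := by
    rw [show g 0 = mob (f z₁) (f (mob (-z₁) 0)) from rfl, hφ0]
    simp [mob]
  have hw0 : ‖mob z₁ z₂‖ < 1 := mob_maps hz₁ hz₂
  have hSch : ‖g (mob z₁ z₂)‖ ≤ ‖mob z₁ z₂‖ :=
    Complex.norm_le_norm_of_mapsTo_ball hgd (hgmaps.mono_right ball_subset_closedBall) hg0 hw0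
  have hginv : g (mob z₁ z₂) = mob (f z₁) (f z₂) := by
    rw [show g (mob z₁ z₂) = mob (f z₁) (f (mob (-z₁) (mob z₁ z₂))) from rfl,
      mob_inv hz₁ hz₂]
  have hden12 : (0:ℝ) < ‖1 - (starRingEnd ℂ) z₁ * z₂‖ := by
    rw [norm_pos_iff]; exact mob_den_ne hz₁ hz₂.le
  have hmle : ‖mob z₁ z₂‖ ≤ s := by
    rw [mob, norm_div, div_le_iff₀ hden12]
    exact pseudo_bound hr0 hr1 h₁ h₂
  have hdenb : (0:ℝ) < ‖1 - (starRingEnd ℂ) (f z₁) * f z₂‖ := by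
    rw [norm_pos_iff]; exact mob_den_ne hab hab2.le
  have hstep : ‖f z₂ - f z₁‖ ≤
      s * ‖1 - (starRingEnd ℂ) (f z₁) * f z₂‖ := by
    have h := (hginv ▸ hSch).trans hmle
    rw [mob, norm_div, div_le_iff₀ hdenb] at h
    exact h
  have hDflip : ‖f z₂ - f z₁‖ = ‖f z₁ - f z₂‖ :=
    norm_sub_rev _ _
  have hE : ‖1 - (starRingEnd ℂ) (f z₁) * f z₂‖ ≤
      (1 - ‖f z₁‖ ^ 2) + ‖f z₁‖ * ‖f z₁ - f z₂‖ := by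
    have hsplit : (1:ℂ) - (starRingEnd ℂ) (f z₁) * f z₂ =
        (1 - (starRingEnd ℂ) (f z₁) * f z₁) + (starRingEnd ℂ) (f z₁) * (f z₁ - f z₂) := by
      ring
    rw [hsplit]
    refine (norm_add_le _ _).trans ?_
    have e1 : ‖1 - (starRingEnd ℂ) (f z₁) * f z₁‖ =
        1 - ‖f z₁‖ ^ 2 := by
      rw [mul_comm, Complex.mul_conj]
      have hnsq : Complex.normSq (f z₁) = ‖f z₁‖ ^ 2 :=
        (Complex.sq_norm _).symm
      rw [show (1:ℂ) - (Complex.normSq (f z₁) : ℂ)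
            = ((1 - ‖f z₁‖ ^ 2 : ℝ) : ℂ) by rw [hnsq]; push_cast; ring,
        Complex.norm_real, Real.norm_eq_abs]
      exact abs_of_nonneg (by nlinarith [norm_nonneg (f z₁)])
    have e2 : ‖(starRingEnd ℂ) (f z₁) * (f z₁ - f z₂)‖ =
        ‖f z₁‖ * ‖f z₁ - f z₂‖ := by
      rw [norm_mul, Complex.norm_conj]
    rw [e1, e2]
  have hDs : ‖f z₁ - f z₂‖ ≤
      s * ((1 - ‖f z₁‖ ^ 2)
        + ‖f z₁‖ * ‖f z₁ - f z₂‖) := by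
    rw [← hDflip]
    rw [← hDflip] at hE
    exact hstep.trans (mul_le_mul_of_nonneg_left hE hs0.le)
  have hAB : ‖f z₁‖ - ‖f z₂‖ ≤ ‖f z₁ - f z₂‖ :=
    (le_abs_self _).trans (abs_norm_sub_norm_le _ _)
  exact arith_final hs0 hs1 hab (norm_nonneg _) (norm_nonneg _)
    (norm_nonneg _) hAB hDs
end

section
/- For every integer a ≥ 0, the polynomial S(t) = t⁶ − a·t⁵ − t⁴ + (2a−1)·t³ − t² − a·t + 1 has a complex root s with |s| = 1. -/
open Real

/-- For every integer `a ≥ 0`, the polynomial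
`t⁶ - a·t⁵ - t⁴ + (2a-1)·t³ - t² - a·t + 1` has a root on the unit circle. -/
theorem salem_factor_unimodular_root (a : ℤ) (ha : 0 ≤ a) :
    ∃ s : ℂ, s ^ 6 - (a : ℂ) * s ^ 5 - s ^ 4 + (2 * (a : ℂ) - 1) * s ^ 3
        - s ^ 2 - (a : ℂ) * s + 1 = 0 ∧ ‖s‖ = 1 := by
  set f : ℝ → ℝ := fun θ => 2 * Real.cos (3 * θ) - 2 * (a : ℝ) * Real.cos (2 * θ)
      - 2 * Real.cos θ + 2 * (a : ℝ) - 1 with hf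
  have hcont : Continuous f := by fun_prop
  have h0 : f 0 = -1 := by simp [hf]
  have h1 : f (2 * π / 3) = 3 * (a : ℝ) + 2 := by
    have e3 : (3 : ℝ) * (2 * π / 3) = 2 * π - 0 := by ring
    have e2 : (2 : ℝ) * (2 * π / 3) = 2 * π - 2 * π / 3 := by ring
    have e1 : (2 : ℝ) * π / 3 = π - π / 3 := by ring
    have hc3 : Real.cos (3 * (2 * π / 3)) = 1 := by
      rw [e3, Real.cos_two_pi_sub, Real.cos_zero]
    have hc1 : Real.cos (2 * π / 3) = -(1 / 2) := by
      rw [e1, Real.cos_pi_sub, Real.cos_pi_div_three]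
    have hc2 : Real.cos (2 * (2 * π / 3)) = -(1 / 2) := by
      rw [e2, Real.cos_two_pi_sub, hc1]
    simp only [hf, hc3, hc2, hc1]
    ring
  have hle : (0 : ℝ) ≤ 2 * π / 3 := by positivity
  have hiv : (0 : ℝ) ∈ Set.Icc (f 0) (f (2 * π / 3)) := by
    constructor
    · rw [h0]; norm_num
    · rw [h1]
      have : (0 : ℝ) ≤ (a : ℝ) := by exact_mod_cast ha
      linarith
  obtain ⟨θ, -, hθ⟩ := intermediate_value_Icc hle hcont.continuousOn hiv
  refine ⟨Complex.exp (θ * Complex.I), ?_, Complex.norm_exp_ofReal_mul_I θ⟩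
  set s : ℂ := Complex.exp (θ * Complex.I) with hsdef
  have hs : s ≠ 0 := Complex.exp_ne_zero _
  have key : ∀ k : ℕ, ((Real.cos (k * θ) : ℝ) : ℂ) = (s ^ k + (s ^ k)⁻¹) / 2 := by
    intro k
    rw [Complex.ofReal_cos, Complex.cos]
    congr 1
    have h1 : (((k : ℝ) * θ : ℝ) : ℂ) * Complex.I = k * (θ * Complex.I) := by
      push_cast; ring
    rw [neg_mul, Complex.exp_neg, h1, Complex.exp_nat_mul]
  have k3 := key 3
  have k2 := key 2
  have k1 := key 1
  norm_num at k3 k2 k1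
  have hθC : ((f θ : ℝ) : ℂ) = 0 := by rw [hθ]; norm_num
  simp only [hf] at hθC
  push_cast at hθC
  rw [k3, k2, k1] at hθC
  field_simp [hs] at hθC
  have hmul : s ^ 3 * (s ^ 6 - (a : ℂ) * s ^ 5 - s ^ 4 + (2 * (a : ℂ) - 1) * s ^ 3
      - s ^ 2 - (a : ℂ) * s + 1) = 0 := by linear_combination s ^ 3 * hθC
  rcases mul_eq_zero.mp hmul with h | h
  · exact absurd h (pow_ne_zero 3 hs)
  · exact h
end
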